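/- Let K be a closed subgroup of ℤ₂ˣ whose image under the reduction map ℤ₂ˣ → (ℤ/8ℤ)ˣ is all of (ℤ/8ℤ)ˣ. Then K = ℤ₂ˣ. -/

import Mathlib

open Filter Topology

private lemma sub_mod' (k : ℕ) (c : ℤ_[2]) (a : ℕ)
    (h : PadicInt.toZModPow k c = (a : ZMod (2^k))) :
    ∃ d : ℤ_[2], c = a + 2^k * d := by
  have hker : c - a ∈ RingHom.ker (PadicInt.toZModPow k) := by
    rw [RingHom.mem_ker, map_sub, map_natCast, h, sub_self]
  rw [PadicInt.ker_toZModPow] at hker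
  obtain ⟨d, hd⟩ := Ideal.mem_span_singleton'.mp hker
  exact ⟨d, by linear_combination -hd⟩

private lemma mod2_cases' (c : ℤ_[2]) : ∃ d : ℤ_[2], c = 2*d ∨ c = 1 + 2*d := by
  obtain ⟨d, hd⟩ := sub_mod' 1 c (PadicInt.toZModPow 1 c).val
    (by rw [ZMod.natCast_val, ZMod.cast_id])
  have hrlt : (PadicInt.toZModPow 1 c).val < 2 := by
    simpa using ZMod.val_lt (PadicInt.toZModPow 1 c)
  rcases (by omega : (PadicInt.toZModPow 1 c).val = 0 ∨ (PadicInt.toZModPow 1 c).val = 1) with h | h <;> rw [h] at hd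
  · exact ⟨d, Or.inl (by rw [hd]; push_cast; ring)⟩
  · exact ⟨d, Or.inr (by rw [hd]; push_cast; ring)⟩

private lemma odd_pow' (x a : ℤ_[2]) (hx : x = 1 + 2*a) : ∀ n : ℕ, ∃ e, x^n = 1 + 2*e := by
  intro n; induction n with
  | zero => exact ⟨0, by ring⟩
  | succ n ih =>
    obtain ⟨e, he⟩ := ih
    exact ⟨e + a + 2*e*a, by rw [pow_succ, he, hx]; ring⟩

private lemma pow_aux' (x s : ℤ_[2]) (hx : x = 1 + 4*(1+2*s)) :
    ∀ m : ℕ, ∃ u v : ℤ_[2], x^(2^m) = 1 + 2^(m+2)*u ∧ u = 1+2*v := by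
  intro m
  induction m with
  | zero => exact ⟨1+2*s, s, by rw [hx]; ring, rfl⟩
  | succ m ih =>
    obtain ⟨u, v, hu, hv⟩ := ih
    refine ⟨u + 2^(m+1)*u^2, v + 2^m*u^2, ?_, by rw [hv]; ring⟩
    have h2 : x^(2^(m+1)) = (x^(2^m))^2 := by rw [← pow_mul, pow_succ]
    rw [h2, hu]; ring

private lemma approx' (x w s t : ℤ_[2]) (hx : x = 1 + 4*(1+2*s)) (hw : w = 1 + 8*t) :
    ∀ k : ℕ, ∃ (n : ℕ) (c : ℤ_[2]), x^n - w = 2^(k+3) * c := by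
  intro k
  induction k with
  | zero =>
    obtain ⟨u, v, hu, hv⟩ := pow_aux' x s hx 1
    have hu2 : x^2 = 1 + 2^3*u := by norm_num at hu; exact hu
    exact ⟨2, u - t, by rw [hu2, hw]; ring⟩
  | succ k ih =>
    obtain ⟨n, c, hc⟩ := ih
    obtain ⟨d, hd | hd⟩ := mod2_cases' c
    · exact ⟨n, d, by rw [hc, hd]; ring⟩
    · obtain ⟨u, v, hu, hv⟩ := pow_aux' x s hx (k+1)
      obtain ⟨e, he⟩ := odd_pow' x (2*(1+2*s)) (by rw [hx]; ring) n
      refine ⟨n + 2^(k+1), 1 + d + v + e + 2*v*e, ?_⟩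
      calc x ^ (n + 2^(k+1)) - w = (x^n - w) + x^n * (x^(2^(k+1)) - 1) := by
            rw [pow_add]; ring
        _ = 2^(k+3)*c + x^n * (2^(k+3)*u) := by rw [hc, hu]; ring
        _ = 2^(k+1+3) * (1 + d + v + e + 2*v*e) := by rw [hd, hv, he]; ring

private lemma units_tendsto' {f : ℕ → ℤ_[2]ˣ} {w : ℤ_[2]ˣ}
    (h1 : Tendsto (fun k => ((f k : ℤ_[2]))) atTop (𝓝 (w : ℤ_[2])))
    (h2 : Tendsto (fun k => (((f k)⁻¹ : ℤ_[2]ˣ) : ℤ_[2])) atTop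
      (𝓝 ((w⁻¹ : ℤ_[2]ˣ) : ℤ_[2]))) :
    Tendsto f atTop (𝓝 w) := by
  rw [(Units.isEmbedding_embedProduct (M := ℤ_[2])).tendsto_nhds_iff]
  exact h1.prodMk_nhds ((MulOpposite.continuous_op.tendsto _).comp h2)

private lemma unit_norm_one (u : ℤ_[2]ˣ) : ‖(u : ℤ_[2])‖ = 1 :=
  PadicInt.isUnit_iff.mp u.isUnit

/-- Let `K` be a closed subgroup of `ℤ₂ˣ` whose image under reduction modulo `8` is all of
`(ℤ/8ℤ)ˣ`.  Then `K = ℤ₂ˣ`. -/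
theorem closed_subgroup_eq_top_of_surjects_mod_eight (K : Subgroup ℤ_[2]ˣ)
    (hclosed : IsClosed (K : Set ℤ_[2]ˣ))
    (hsurj : Subgroup.map (Units.map (PadicInt.toZModPow 3).toMonoidHom) K = ⊤) :
    K = ⊤ := by
  obtain ⟨xu, hxK, hxu⟩ : ∃ xu ∈ K,
      Units.map (PadicInt.toZModPow 3).toMonoidHom xu
        = ZMod.unitOfCoprime (n := 2^3) 5 (by norm_num) := by
    have : (ZMod.unitOfCoprime (n := 2^3) 5 (by norm_num)) ∈
        Subgroup.map (Units.map (PadicInt.toZModPow 3).toMonoidHom) K := by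
      rw [hsurj]; exact Subgroup.mem_top _
    exact this
  have hx5 : PadicInt.toZModPow 3 (xu : ℤ_[2]) = ((5 : ℕ) : ZMod (2^3)) := by
    have h := congrArg Units.val hxu
    simpa [ZMod.coe_unitOfCoprime] using h
  obtain ⟨s, hs⟩ := sub_mod' 3 (xu : ℤ_[2]) 5 hx5
  have hx : (xu : ℤ_[2]) = 1 + 4*(1+2*s) := by rw [hs]; push_cast; ring
  have main : ∀ w : ℤ_[2]ˣ,
      PadicInt.toZModPow 3 (w : ℤ_[2]) = ((1 : ℕ) : ZMod (2^3)) → w ∈ K := by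
    intro w hw
    obtain ⟨t, ht⟩ := sub_mod' 3 (w : ℤ_[2]) 1 hw
    have hwt : (w : ℤ_[2]) = 1 + 8*t := by rw [ht]; push_cast; ring
    choose n c hnc using approx' (xu : ℤ_[2]) (w : ℤ_[2]) s t hx hwt
    set f : ℕ → ℤ_[2]ˣ := fun k => xu ^ (n k) with hf
    have hfval : ∀ k, ((f k : ℤ_[2])) - (w : ℤ_[2]) = 2^(k+3) * c k := by
      intro k
      simpa [hf, Units.val_pow_eq_pow_val] using hnc k
    have hbound : ∀ k, ‖((f k : ℤ_[2])) - (w : ℤ_[2])‖ ≤ (2⁻¹ : ℝ) ^ k := by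
      intro k
      rw [hfval k]
      have h2 : ‖(2 : ℤ_[2])‖ = (2⁻¹ : ℝ) := by
        simpa using PadicInt.norm_p (p := 2)
      calc ‖(2:ℤ_[2])^(k+3) * c k‖ = ‖(2:ℤ_[2])‖^(k+3) * ‖c k‖ := by
            rw [norm_mul, norm_pow]
        _ ≤ (2⁻¹:ℝ)^(k+3) * 1 := by
            rw [h2]
            exact mul_le_mul_of_nonneg_left (PadicInt.norm_le_one _) (by positivity)
        _ ≤ (2⁻¹:ℝ)^k := by
            rw [mul_one]
            exact pow_le_pow_of_le_one (by norm_num) (by norm_num) (by omega)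
    have htend0 : Tendsto (fun k => ‖((f k : ℤ_[2])) - (w : ℤ_[2])‖) atTop (𝓝 0) :=
      squeeze_zero (fun k => norm_nonneg _) hbound
        (tendsto_pow_atTop_nhds_zero_of_lt_one (by norm_num) (by norm_num))
    have hco : Tendsto (fun k => ((f k : ℤ_[2]))) atTop (𝓝 (w : ℤ_[2])) :=
      tendsto_iff_norm_sub_tendsto_zero.mpr htend0
    have key : ∀ k, ‖(((f k)⁻¹ : ℤ_[2]ˣ) : ℤ_[2]) - ((w⁻¹ : ℤ_[2]ˣ) : ℤ_[2])‖
        = ‖((f k : ℤ_[2])) - (w : ℤ_[2])‖ := by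
      intro k
      have ha : (((f k)⁻¹ : ℤ_[2]ˣ) : ℤ_[2]) * ((f k : ℤ_[2])) = 1 := by
        rw [← Units.val_mul, inv_mul_cancel, Units.val_one]
      have hb : ((w : ℤ_[2])) * ((w⁻¹ : ℤ_[2]ˣ) : ℤ_[2]) = 1 := by
        rw [← Units.val_mul, mul_inv_cancel, Units.val_one]
      have hid : (((f k)⁻¹ : ℤ_[2]ˣ) : ℤ_[2]) - ((w⁻¹ : ℤ_[2]ˣ) : ℤ_[2])
          = (((f k)⁻¹ : ℤ_[2]ˣ) : ℤ_[2]) * (((w : ℤ_[2])) - ((f k : ℤ_[2])))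
            * ((w⁻¹ : ℤ_[2]ˣ) : ℤ_[2]) := by
        linear_combination ((w⁻¹ : ℤ_[2]ˣ) : ℤ_[2]) * ha
          - (((f k)⁻¹ : ℤ_[2]ˣ) : ℤ_[2]) * hb
      rw [hid, norm_mul, norm_mul, unit_norm_one, unit_norm_one,
        one_mul, mul_one, norm_sub_rev]
    have hinv : Tendsto (fun k => (((f k)⁻¹ : ℤ_[2]ˣ) : ℤ_[2])) atTop
        (𝓝 ((w⁻¹ : ℤ_[2]ˣ) : ℤ_[2])) := by
      rw [tendsto_iff_norm_sub_tendsto_zero]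
      simpa only [key] using htend0
    exact hclosed.mem_of_tendsto (units_tendsto' hco hinv)
      (Filter.Eventually.of_forall fun k => pow_mem hxK (n k))
  rw [eq_top_iff]
  intro u _
  obtain ⟨g, hgK, hg⟩ : ∃ g ∈ K,
      Units.map (PadicInt.toZModPow 3).toMonoidHom g
        = Units.map (PadicInt.toZModPow 3).toMonoidHom u := by
    have : Units.map (PadicInt.toZModPow 3).toMonoidHom u ∈
        Subgroup.map (Units.map (PadicInt.toZModPow 3).toMonoidHom) K := by
      rw [hsurj]; exact Subgroup.mem_top _
    exact this
  have h1 : PadicInt.toZModPow 3 ((u * g⁻¹ : ℤ_[2]ˣ) : ℤ_[2]) = ((1 : ℕ) : ZMod (2^3)) := by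
    have hone : Units.map (PadicInt.toZModPow 3).toMonoidHom (u * g⁻¹) = 1 := by
      rw [map_mul, map_inv, hg, mul_inv_cancel]
    have := congrArg Units.val hone
    simpa using this
  have := main (u * g⁻¹) h1
  simpa using mul_mem this hgK
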